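/- Let F = ℚ(u) be the field of rational functions in one variable u over ℚ, and let V be the F-vector space with basis (L, L′₁, L′₂). Let T : V → V be the F-linear operator with T L = L + L′₁ + L′₂, T L′₁ = (u²−1)L + (u²−1)L′₁ − L′₂, and T L′₂ = (u²−1)L − L′₁ + (u²−1)L′₂. Then (T + 1)(T − u²) = 0; the u²-eigenspace of T is the two-dimensional subspace spanned by L + L′₁ and L + L′₂; and the (−1)-eigenspace of T is the one-dimensional subspace spanned by (u²−1)L − L′₁ − L′₂. -/

import Mathlib

/-- The element `u` of the field `F = ℚ(u)` of rational functions over `ℚ`. -/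
noncomputable def u : RatFunc ℚ := RatFunc.X

private lemma u_sq_add_one_ne : (u ^ 2 + 1 : RatFunc ℚ) ≠ 0 := by
  have h : (u ^ 2 + 1 : RatFunc ℚ)
      = algebraMap (Polynomial ℚ) (RatFunc ℚ) (Polynomial.X ^ 2 + Polynomial.C 1) := by
    simp [u, RatFunc.algebraMap_X]
  rw [h]
  exact RatFunc.algebraMap_ne_zero (Polynomial.X_pow_add_C_ne_zero (by norm_num) 1)

private lemma coeffs_zero {V : Type*} [AddCommGroup V] [Module (RatFunc ℚ) V]
    (b : Module.Basis (Fin 3) (RatFunc ℚ) V) {x y z : RatFunc ℚ}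
    (h : x • b 0 + y • b 1 + z • b 2 = 0) : x = 0 ∧ y = 0 ∧ z = 0 := by
  have hli := b.linearIndependent
  rw [Fintype.linearIndependent_iff] at hli
  have hxyz := hli ![x, y, z] (by simpa [Fin.sum_univ_three] using h)
  exact ⟨hxyz 0, hxyz 1, hxyz 2⟩

set_option maxHeartbeats 1600000 in
/-- Formulas (7.6)(g′′) and (7.6)(h′) of Lusztig–Vogan: on the `ℚ(u)`-vector space with
basis `(L, L′₁, L′₂)`, the operator with `T L = L + L′₁ + L′₂`,
`T L′₁ = (u²−1)L + (u²−1)L′₁ − L′₂`, `T L′₂ = (u²−1)L − L′₁ + (u²−1)L′₂` satisfies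
`(T+1)(T−u²) = 0`, its `u²`-eigenspace is the two-dimensional span of `L+L′₁` and
`L+L′₂`, and its `(−1)`-eigenspace is the one-dimensional span of `(u²−1)L − L′₁ − L′₂`. -/
theorem hecke_type_two_imaginary_II_II (V : Type*) [AddCommGroup V]
    [Module (RatFunc ℚ) V] (b : Module.Basis (Fin 3) (RatFunc ℚ) V)
    (T : V →ₗ[RatFunc ℚ] V)
    (h1 : T (b 0) = b 0 + b 1 + b 2)
    (h2 : T (b 1) = (u ^ 2 - 1) • b 0 + (u ^ 2 - 1) • b 1 - b 2)
    (h3 : T (b 2) = (u ^ 2 - 1) • b 0 - b 1 + (u ^ 2 - 1) • b 2) :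
    (T + LinearMap.id) ∘ₗ (T - u ^ 2 • LinearMap.id) = 0 ∧
    Module.End.eigenspace T (u ^ 2) = Submodule.span (RatFunc ℚ) {b 0 + b 1, b 0 + b 2} ∧
    Module.finrank (RatFunc ℚ) (Module.End.eigenspace T (u ^ 2)) = 2 ∧
    Module.End.eigenspace T (-1) =
      Submodule.span (RatFunc ℚ) {(u ^ 2 - 1) • b 0 - b 1 - b 2} ∧
    Module.finrank (RatFunc ℚ) (Module.End.eigenspace T (-1)) = 1 := by
  -- eigenvector computations
  have e1 : T (b 0 + b 1) = (u ^ 2) • (b 0 + b 1) := by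
    rw [map_add, h1, h2]
    refine b.repr.injective (Finsupp.ext fun i => ?_)
    fin_cases i <;> simp [map_add, map_sub, map_smul, Finsupp.single_apply] <;> ring
  have e2 : T (b 0 + b 2) = (u ^ 2) • (b 0 + b 2) := by
    rw [map_add, h1, h3]
    refine b.repr.injective (Finsupp.ext fun i => ?_)
    fin_cases i <;> simp [map_add, map_sub, map_smul, Finsupp.single_apply] <;> ring
  have e3 : T ((u ^ 2 - 1) • b 0 - b 1 - b 2)
      = (-1 : RatFunc ℚ) • ((u ^ 2 - 1) • b 0 - b 1 - b 2) := by
    rw [map_sub, map_sub, map_smul, h1, h2, h3]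
    refine b.repr.injective (Finsupp.ext fun i => ?_)
    fin_cases i <;> simp [map_add, map_sub, map_smul, Finsupp.single_apply] <;> ring
  -- the quadratic relation
  have expand : ∀ v : V, ((T + LinearMap.id) ∘ₗ (T - u ^ 2 • LinearMap.id)) v
      = T (T v) - u ^ 2 • T v + T v - u ^ 2 • v := by
    intro v
    simp only [LinearMap.comp_apply, LinearMap.add_apply, LinearMap.sub_apply,
      LinearMap.smul_apply, LinearMap.id_apply, map_sub, map_smul, smul_add, smul_sub]
    abel
  have q0 : ((T + LinearMap.id) ∘ₗ (T - u ^ 2 • LinearMap.id)) (b 0) = 0 := by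
    rw [expand]
    simp only [h1, h2, h3, map_add, map_sub, map_smul]
    refine b.repr.injective (Finsupp.ext fun j => ?_)
    fin_cases j <;> simp [map_add, map_sub, map_smul, Finsupp.single_apply] <;> ring
  have q1 : ((T + LinearMap.id) ∘ₗ (T - u ^ 2 • LinearMap.id)) (b 1) = 0 := by
    rw [expand]
    simp only [h1, h2, h3, map_add, map_sub, map_smul]
    refine b.repr.injective (Finsupp.ext fun j => ?_)
    fin_cases j <;> simp [map_add, map_sub, map_smul, Finsupp.single_apply] <;> ring
  have q2 : ((T + LinearMap.id) ∘ₗ (T - u ^ 2 • LinearMap.id)) (b 2) = 0 := by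
    rw [expand]
    simp only [h1, h2, h3, map_add, map_sub, map_smul]
    refine b.repr.injective (Finsupp.ext fun j => ?_)
    fin_cases j <;> simp [map_add, map_sub, map_smul, Finsupp.single_apply] <;> ring
  have hquad : (T + LinearMap.id) ∘ₗ (T - u ^ 2 • LinearMap.id) = 0 := by
    refine b.ext fun i => ?_
    fin_cases i
    exacts [q0, q1, q2]
  have hEu : Module.End.eigenspace T (u ^ 2)
      = Submodule.span (RatFunc ℚ) {b 0 + b 1, b 0 + b 2} := by
    apply le_antisymm
    · intro x hx
      rw [Module.End.mem_eigenspace_iff] at hx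
      have hx' : x = b.repr x 0 • b 0 + b.repr x 1 • b 1 + b.repr x 2 • b 2 := by
        have := b.sum_repr x
        rw [Fin.sum_univ_three] at this
        exact this.symm
      rw [hx'] at hx
      simp only [map_add, map_smul, h1, h2, h3] at hx
      have k1 := congrArg (fun w => b.repr w 1) hx
      simp [map_add, map_sub, map_smul, Finsupp.single_apply] at k1
      -- k1 gives the relation among coordinates at index 1
      have hc : b.repr x 0 = b.repr x 1 + b.repr x 2 := by linear_combination k1
      rw [Submodule.mem_span_pair]
      refine ⟨b.repr x 1, b.repr x 2, ?_⟩
      rw [hx', hc]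
      refine b.repr.injective (Finsupp.ext fun i => ?_)
      fin_cases i <;> simp [map_add, map_sub, map_smul, Finsupp.single_apply] <;> ring
    · rw [Submodule.span_le]
      rintro v (rfl | rfl) <;> rw [SetLike.mem_coe, Module.End.mem_eigenspace_iff]
      · exact e1
      · exact e2
  have hEm : Module.End.eigenspace T (-1)
      = Submodule.span (RatFunc ℚ) {(u ^ 2 - 1) • b 0 - b 1 - b 2} := by
    apply le_antisymm
    · intro x hx
      rw [Module.End.mem_eigenspace_iff] at hx
      have hx' : x = b.repr x 0 • b 0 + b.repr x 1 • b 1 + b.repr x 2 • b 2 := by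
        have := b.sum_repr x
        rw [Fin.sum_univ_three] at this
        exact this.symm
      rw [hx'] at hx
      simp only [map_add, map_smul, h1, h2, h3] at hx
      have k1 := congrArg (fun w => b.repr w 1) hx
      have k2 := congrArg (fun w => b.repr w 2) hx
      simp [map_add, map_sub, map_smul, Finsupp.single_apply] at k1 k2
      have hcc : b.repr x 1 = b.repr x 2 := by
        have h12 : (u ^ 2 + 1) * (b.repr x 1 - b.repr x 2) = 0 := by
          linear_combination k1 - k2
        rcases mul_eq_zero.mp h12 with h | h
        · exact absurd h u_sq_add_one_ne
        · linear_combination h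
      have hc : b.repr x 0 = -(u ^ 2 - 1) * b.repr x 1 := by
        linear_combination k2 + u ^ 2 * hcc
      rw [Submodule.mem_span_singleton]
      refine ⟨-(b.repr x 1), ?_⟩
      rw [hx', hc, ← hcc]
      refine b.repr.injective (Finsupp.ext fun i => ?_)
      fin_cases i <;> simp [map_add, map_sub, map_smul, Finsupp.single_apply] <;> ring
    · rw [Submodule.span_le]
      rintro v rfl
      rw [SetLike.mem_coe, Module.End.mem_eigenspace_iff]
      exact e3
  have hli2 : LinearIndependent (RatFunc ℚ) ![b 0 + b 1, b 0 + b 2] := by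
    rw [LinearIndependent.pair_iff]
    intro s t hst
    have h0 : (s + t) • b 0 + s • b 1 + t • b 2 = 0 := by
      rw [← hst]
      refine b.repr.injective (Finsupp.ext fun i => ?_)
      fin_cases i <;> simp [map_add, map_sub, map_smul, Finsupp.single_apply] <;> ring
    obtain ⟨-, hs, ht⟩ := coeffs_zero b h0
    exact ⟨hs, ht⟩
  have hr : Set.range ![b 0 + b 1, b 0 + b 2] = {b 0 + b 1, b 0 + b 2} := by
    ext v
    simp [Fin.exists_fin_two, or_comm]
  have hv : (u ^ 2 - 1) • b 0 - b 1 - b 2 ≠ 0 := by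
    intro h
    have h' : (u ^ 2 - 1) • b 0 + (-1 : RatFunc ℚ) • b 1 + (-1 : RatFunc ℚ) • b 2 = 0 := by
      rw [← h]
      refine b.repr.injective (Finsupp.ext fun i => ?_)
      fin_cases i <;> simp [map_add, map_sub, map_smul, Finsupp.single_apply] <;> ring
    have := (coeffs_zero b h').2.1
    simp at this
  refine ⟨hquad, hEu, ?_, hEm, ?_⟩
  · rw [hEu, ← hr, finrank_span_eq_card hli2]
    simp
  · rw [hEm, finrank_span_singleton hv]
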